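/- Reduction to an (n−1)-state problem: fix n ≥ 2 and set c_i = 1 − |N_{in}|² for i = 1,…,n−1 (each c_i > 0 since N is positive definite with unit diagonal). Define the (n−1)×(n−1) matrix N′ by N′_{ij} = (N_{ij} − N_{in} N_{nj}) / √(c_i c_j) and the probabilities η′_i = η_i c_i / Σ_{k<n} η_k c_k. Then N′ is Hermitian positive definite with N′_{ii} = 1, the η′_i are positive and sum to 1, and the maximum of Σ_{i<n} η_i x_i over x ∈ ℝⁿ with x_i ≥ 0 for all i, x_n = 0, and N − diag(x) positive semidefinite equals (Σ_{k<n} η_k c_k) times the maximum of Σ_{i<n} η′_i x′_i over x′ ∈ ℝ^{n−1} with x′_i ≥ 0 and N′ − diag(x′) positive semidefinite; moreover x attains the first maximum if and only if the vector x′ with x′_i = x_i / c_i attains the second. -/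

import Mathlib

open ComplexOrder

open Matrix

open Matrix in
private lemma aux_eq_diag_mul {m : Type*} [Fintype m] [DecidableEq m] (d : m → ℂ)
    (T G : Matrix m m ℂ) (h : ∀ i j, G i j = d i * T i j * d j) :
    G = Matrix.diagonal d * T * Matrix.diagonal d := by
  ext i j
  rw [Matrix.mul_diagonal, Matrix.diagonal_mul, h]

open Matrix in
private lemma aux_conj_diag_psd_iff {m : Type*} [Fintype m] [DecidableEq m] (d : m → ℝ)
    (hd : ∀ i, d i ≠ 0) (T : Matrix m m ℂ) :
    (Matrix.diagonal (fun i => (d i : ℂ)) * T * Matrix.diagonal (fun i => (d i : ℂ))).PosSemidef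
      ↔ T.PosSemidef := by
  set E := Matrix.diagonal (fun i => (d i : ℂ)) with hE
  have hEH : Eᴴ = E := by
    have h1 : (star fun i => ((d i : ℝ) : ℂ)) = fun i => ((d i : ℝ) : ℂ) := by
      funext i
      simp [Complex.conj_ofReal]
    rw [hE, diagonal_conjTranspose, h1]
  set F := Matrix.diagonal (fun i => ((d i : ℂ))⁻¹) with hF
  have hFH : Fᴴ = F := by
    have h1 : (star fun i => (((d i : ℝ) : ℂ))⁻¹) = fun i => (((d i : ℝ) : ℂ))⁻¹ := by
      funext i
      simp [← Complex.ofReal_inv, Complex.conj_ofReal]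
    rw [hF, diagonal_conjTranspose, h1]
  have hFE : F * E = 1 := by
    rw [hF, hE, diagonal_mul_diagonal]
    rw [show (fun i => ((d i : ℂ))⁻¹ * (d i : ℂ)) = fun _ => (1 : ℂ) by
      funext i
      exact inv_mul_cancel₀ (by exact_mod_cast hd i)]
    exact Matrix.diagonal_one
  have hEF : E * F = 1 := by
    rw [hF, hE, diagonal_mul_diagonal]
    rw [show (fun i => (d i : ℂ) * ((d i : ℂ))⁻¹) = fun _ => (1 : ℂ) by
      funext i
      exact mul_inv_cancel₀ (by exact_mod_cast hd i)]
    exact Matrix.diagonal_one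
  constructor
  · intro h
    have hT : T = Fᴴ * (E * T * E) * F := by
      rw [hFH]
      calc T = 1 * T * 1 := by rw [one_mul, mul_one]
        _ = (F * E) * T * (E * F) := by rw [hFE, hEF]
        _ = F * (E * T * E) * F := by noncomm_ring
    rw [hT]
    exact h.conjTranspose_mul_mul_same F
  · intro h
    have : E * T * E = Eᴴ * T * E := by rw [hEH]
    rw [this]
    exact h.conjTranspose_mul_mul_same E

open Matrix in
private lemma aux_posDef_of_det {m : Type*} [Fintype m] [DecidableEq m] {T : Matrix m m ℂ}
    (h : T.PosSemidef) (hdet : T.det ≠ 0) : T.PosDef := by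
  refine Matrix.PosDef.of_dotProduct_mulVec_pos h.1 fun ⦃v⦄ hv => ?_
  rcases lt_or_eq_of_le (h.dotProduct_mulVec_nonneg v) with h0 | h0
  · exact h0
  · exfalso
    apply hv
    have hz : T *ᵥ v = 0 := (h.dotProduct_mulVec_zero_iff v).mp h0.symm
    have := congrArg (fun w => T⁻¹ *ᵥ w) hz
    simpa [Matrix.mulVec_mulVec, Matrix.nonsing_inv_mul T (isUnit_iff_ne_zero.mpr hdet)]
      using this

open Matrix in
private lemma aux_schur {n : ℕ} (N : Matrix (Fin (n + 1)) (Fin (n + 1)) ℂ)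
    (hH : N.IsHermitian) (hlast : N (Fin.last n) (Fin.last n) = 1)
    (x : Fin (n + 1) → ℝ) (hx : x (Fin.last n) = 0) :
    ((N - Matrix.diagonal fun i => (x i : ℂ)).PosSemidef ↔
      (Matrix.of (fun i j : Fin n =>
          N i.castSucc j.castSucc - N i.castSucc (Fin.last n) * N (Fin.last n) j.castSucc)
        - Matrix.diagonal fun i : Fin n => (x i.castSucc : ℂ)).PosSemidef) ∧
    (N - Matrix.diagonal fun i => (x i : ℂ)).det =
      (Matrix.of (fun i j : Fin n =>
          N i.castSucc j.castSucc - N i.castSucc (Fin.last n) * N (Fin.last n) j.castSucc)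
        - Matrix.diagonal fun i : Fin n => (x i.castSucc : ℂ)).det := by
  set M := N - Matrix.diagonal fun i => (x i : ℂ) with hMdef
  have hdiagH : (Matrix.diagonal fun i => (x i : ℂ)).IsHermitian := by
    apply isHermitian_diagonal_of_self_adjoint
    show (star fun i => ((x i : ℝ) : ℂ)) = _
    funext i
    simp [Complex.conj_ofReal]
  have hMH : M.IsHermitian := hH.sub hdiagH
  set A₀ : Matrix (Fin n) (Fin n) ℂ := Matrix.of (fun i j => M i.castSucc j.castSucc) with hA₀
  set B₀ : Matrix (Fin n) (Fin 1) ℂ := Matrix.of (fun i _ => M i.castSucc (Fin.last n)) with hB₀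
  have hicne : ∀ i : Fin n, i.castSucc ≠ Fin.last n := fun i => (Fin.castSucc_lt_last i).ne
  have hMiclast : ∀ i : Fin n, M i.castSucc (Fin.last n) = N i.castSucc (Fin.last n) := by
    intro i
    simp [hMdef, Matrix.diagonal_apply_ne _ (hicne i)]
  have hMlastic : ∀ j : Fin n, M (Fin.last n) j.castSucc = N (Fin.last n) j.castSucc := by
    intro j
    simp [hMdef, Matrix.diagonal_apply_ne _ (Ne.symm (hicne j))]
  have hMll : M (Fin.last n) (Fin.last n) = 1 := by
    simp [hMdef, Matrix.diagonal_apply_eq, hx, hlast]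
  have hnat : (finSumFinEquiv (Sum.inr (0 : Fin 1)) : Fin (n + 1)) = Fin.last n := by
    rw [finSumFinEquiv_apply_right]
    ext
    simp
  have hca : ∀ i : Fin n, (finSumFinEquiv (Sum.inl i) : Fin (n + 1)) = i.castSucc := by
    intro i
    rw [finSumFinEquiv_apply_left]
    rfl
  have h1 : M.submatrix finSumFinEquiv finSumFinEquiv = fromBlocks A₀ B₀ B₀ᴴ 1 := by
    ext i j
    cases i with
    | inl i =>
      cases j with
      | inl j =>
        simp only [Matrix.submatrix_apply, hca, fromBlocks, Sum.elim_inl]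
        rfl
      | inr j =>
        have : j = 0 := Subsingleton.elim j 0
        subst this
        simp only [Matrix.submatrix_apply, hca, hnat, fromBlocks, Sum.elim_inl, Sum.elim_inr]
        rfl
    | inr i =>
      have : i = 0 := Subsingleton.elim i 0
      subst this
      cases j with
      | inl j =>
        simp only [Matrix.submatrix_apply, hca, hnat, fromBlocks, Sum.elim_inr, Sum.elim_inl,
          Matrix.conjTranspose_apply]
        exact (hMH.apply (Fin.last n) j.castSucc).symm
      | inr j =>
        have : j = 0 := Subsingleton.elim j 0
        subst this
        simp only [Matrix.submatrix_apply, hnat, fromBlocks, Sum.elim_inr, Matrix.one_apply_eq]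
        exact hMll
  haveI : Invertible (1 : Matrix (Fin 1) (Fin 1) ℂ) := invertibleOne
  have hinv1 : (1 : Matrix (Fin 1) (Fin 1) ℂ)⁻¹ = 1 := Matrix.inv_eq_left_inv (by rw [one_mul])
  have h2 : A₀ - B₀ * B₀ᴴ =
      Matrix.of (fun i j : Fin n =>
          N i.castSucc j.castSucc - N i.castSucc (Fin.last n) * N (Fin.last n) j.castSucc)
        - Matrix.diagonal fun i : Fin n => (x i.castSucc : ℂ) := by
    ext i j
    have hbb : (B₀ * B₀ᴴ) i j = N i.castSucc (Fin.last n) * N (Fin.last n) j.castSucc := by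
      rw [Matrix.mul_apply, Fin.sum_univ_one]
      rw [Matrix.conjTranspose_apply]
      rw [hB₀]
      simp only [Matrix.of_apply]
      rw [show star (M j.castSucc (Fin.last n)) = M (Fin.last n) j.castSucc from hMH.apply _ _,
        hMiclast, hMlastic]
    have hdd : Matrix.diagonal (fun i => (x i : ℂ)) i.castSucc j.castSucc =
        Matrix.diagonal (fun i : Fin n => (x i.castSucc : ℂ)) i j := by
      by_cases h : i = j
      · subst h
        simp
      · rw [Matrix.diagonal_apply_ne _ (fun hc => h (Fin.castSucc_injective _ hc)),
          Matrix.diagonal_apply_ne _ h]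
    simp only [Matrix.sub_apply, hbb, hA₀, Matrix.of_apply, hMdef]
    rw [hdd]
    ring
  constructor
  · rw [← Matrix.posSemidef_submatrix_equiv finSumFinEquiv, h1,
      Matrix.PosDef.fromBlocks₂₂ A₀ B₀ Matrix.PosDef.one, hinv1, Matrix.mul_one, h2]
  · calc M.det = (M.submatrix finSumFinEquiv finSumFinEquiv).det :=
        (Matrix.det_submatrix_equiv_self _ _).symm
      _ = _ := by
        rw [h1, Matrix.det_fromBlocks₂₂, invOf_one, Matrix.mul_one, h2, Matrix.det_one, one_mul]

/-- Reduction of the `(n+1)`-state problem with the constraint `x_last = 0` to an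
`n`-state problem: with `c i = 1 - |N_{i,last}|²`, reduced Gram matrix `N'`,
and reduced probabilities `η'`, the constrained maximum equals
`(∑ k, η k * c k)` times the maximum of the reduced problem, and `x` attains the
former iff `x' = x / c` attains the latter. -/
theorem reduction_to_smaller_problem
    (n : ℕ) (hn : 1 ≤ n)
    (N : Matrix (Fin (n + 1)) (Fin (n + 1)) ℂ) (hN : N.PosDef)
    (hNdiag : ∀ i, N i i = 1)
    (η : Fin (n + 1) → ℝ) (hη : ∀ i, 0 < η i) (hηsum : ∑ i, η i = 1)
    (c : Fin n → ℝ)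
    (hc : ∀ i, c i = 1 - ‖N i.castSucc (Fin.last n)‖ ^ 2)
    (N' : Matrix (Fin n) (Fin n) ℂ)
    (hN'def : ∀ i j, N' i j =
      (N i.castSucc j.castSucc -
        N i.castSucc (Fin.last n) * N (Fin.last n) j.castSucc) /
      (Real.sqrt (c i * c j) : ℂ))
    (η' : Fin n → ℝ)
    (hη'def : ∀ i, η' i = η i.castSucc * c i / ∑ k, η k.castSucc * c k)
    (A B : Set ℝ)
    (hA : A = {v | ∃ x : Fin (n + 1) → ℝ, (∀ i, 0 ≤ x i) ∧
      x (Fin.last n) = 0 ∧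
      (N - Matrix.diagonal (fun i => (x i : ℂ))).PosSemidef ∧
      v = ∑ i : Fin n, η i.castSucc * x i.castSucc})
    (hB : B = {v | ∃ y : Fin n → ℝ, (∀ i, 0 ≤ y i) ∧
      (N' - Matrix.diagonal (fun i => (y i : ℂ))).PosSemidef ∧
      v = ∑ i, η' i * y i}) :
    (∀ i, 0 < c i) ∧
    N'.PosDef ∧ (∀ i, N' i i = 1) ∧ (∀ i, 0 < η' i) ∧ (∑ i, η' i = 1) ∧
    (∀ a b : ℝ, IsGreatest A a → IsGreatest B b →
      a = (∑ k : Fin n, η k.castSucc * c k) * b) ∧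
    (∀ x : Fin (n + 1) → ℝ, (∀ i, 0 ≤ x i) → x (Fin.last n) = 0 →
      (N - Matrix.diagonal (fun i => (x i : ℂ))).PosSemidef →
      (IsGreatest A (∑ i : Fin n, η i.castSucc * x i.castSucc) ↔
        IsGreatest B (∑ i : Fin n, η' i * (x i.castSucc / c i)))) := by
  have hicne : ∀ i : Fin n, i.castSucc ≠ Fin.last n := fun i => (Fin.castSucc_lt_last i).ne
  -- positivity of c
  have hcpos : ∀ i, 0 < c i := by
    intro i
    set g := N i.castSucc (Fin.last n) with hg
    set v : Fin (n + 1) → ℂ :=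
      Pi.single i.castSucc 1 + Pi.single (Fin.last n) (-(starRingEnd ℂ g)) with hv
    have hvic : v i.castSucc = 1 := by
      rw [hv, Pi.add_apply, Pi.single_eq_same,
        Pi.single_eq_of_ne (hicne i) _, add_zero]
    have hvne : v ≠ 0 := by
      intro h
      rw [h, Pi.zero_apply] at hvic
      exact one_ne_zero hvic.symm
    have hstarsingle : ∀ (a : Fin (n + 1)) (z : ℂ),
        star (Pi.single a z : Fin (n + 1) → ℂ) = Pi.single a (star z) := by
      intro a z
      funext k
      simp [Pi.single_apply, apply_ite (star : ℂ → ℂ)]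
    have hNlast : N (Fin.last n) i.castSucc = star g := (hN.1.apply _ _).symm ▸ rfl
    have hQval : star v ⬝ᵥ (N *ᵥ v) = ((1 - Complex.normSq g : ℝ) : ℂ) := by
      rw [hv, star_add, hstarsingle, hstarsingle, Matrix.mulVec_add, Matrix.mulVec_single,
        Matrix.mulVec_single, add_dotProduct]
      simp only [single_dotProduct, Pi.add_apply, dotProduct_add, Pi.smul_apply, Matrix.col_apply,
        op_smul_eq_mul]
      rw [hNdiag, hNdiag, hNlast]
      simp only [Complex.star_def, _root_.map_one, map_neg, Complex.conj_conj, ← hg]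
      push_cast
      rw [← Complex.mul_conj]
      ring
    have hQ := hN.dotProduct_mulVec_pos hvne
    rw [hQval] at hQ
    have h2 : 0 < 1 - Complex.normSq g := Complex.zero_lt_real.mp hQ
    rw [hc i, ← hg, Complex.sq_norm]
    exact h2
  -- hermitian relations
  have hgstar : ∀ j : Fin n, N (Fin.last n) j.castSucc = star (N j.castSucc (Fin.last n)) :=
    fun j => (hN.1.apply (Fin.last n) j.castSucc).symm
  have hcC : ∀ i : Fin n,
      N i.castSucc (Fin.last n) * N (Fin.last n) i.castSucc = ((1 - c i : ℝ) : ℂ) := by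
    intro i
    rw [hgstar i, Complex.star_def, Complex.mul_conj, hc i, Complex.sq_norm]
    push_cast
    ring
  -- N' has unit diagonal
  have hN'diag : ∀ i, N' i i = 1 := by
    intro i
    rw [hN'def i i, hNdiag, hcC i, Real.sqrt_mul_self (hcpos i).le]
    rw [show (1 : ℂ) - ((1 - c i : ℝ) : ℂ) = ((c i : ℝ) : ℂ) by push_cast; ring]
    exact div_self (Complex.ofReal_ne_zero.mpr (hcpos i).ne')
  -- probabilities
  haveI hnonempty : Nonempty (Fin n) := ⟨⟨0, hn⟩⟩
  set S := ∑ k : Fin n, η k.castSucc * c k with hSdef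
  have hSpos : 0 < S :=
    Finset.sum_pos (fun k _ => mul_pos (hη _) (hcpos k)) Finset.univ_nonempty
  have hη'pos : ∀ i, 0 < η' i := by
    intro i
    rw [hη'def]
    exact div_pos (mul_pos (hη _) (hcpos i)) hSpos
  have hη'sum : ∑ i, η' i = 1 := by
    simp only [hη'def]
    rw [← Finset.sum_div, ← hSdef, div_self hSpos.ne']
  -- entrywise scaling identity
  have hentry : ∀ (y : Fin n → ℝ) (i j : Fin n),
      ((Matrix.of (fun i j : Fin n =>
          N i.castSucc j.castSucc - N i.castSucc (Fin.last n) * N (Fin.last n) j.castSucc)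
        - Matrix.diagonal fun i : Fin n => ((c i * y i : ℝ) : ℂ)) i j) =
      ((Real.sqrt (c i) : ℝ) : ℂ) * ((N' - Matrix.diagonal fun i => (y i : ℂ)) i j) *
        ((Real.sqrt (c j) : ℝ) : ℂ) := by
    intro y i j
    have hsq : ∀ k : Fin n, ((Real.sqrt (c k) : ℝ) : ℂ) * ((Real.sqrt (c k) : ℝ) : ℂ)
        = ((c k : ℝ) : ℂ) := by
      intro k
      rw [← Complex.ofReal_mul, Real.mul_self_sqrt (hcpos k).le]
    by_cases h : i = j
    · subst h
      simp only [Matrix.sub_apply, Matrix.of_apply, Matrix.diagonal_apply_eq]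
      rw [hNdiag, hcC i, hN'diag i]
      rw [show ((Real.sqrt (c i) : ℝ) : ℂ) * ((1 : ℂ) - (y i : ℂ)) * ((Real.sqrt (c i) : ℝ) : ℂ)
          = ((Real.sqrt (c i) : ℝ) : ℂ) * ((Real.sqrt (c i) : ℝ) : ℂ) * ((1 : ℂ) - (y i : ℂ))
        from by ring, hsq i]
      push_cast
      ring
    · have hij : ((Real.sqrt (c i) : ℝ) : ℂ) * ((Real.sqrt (c j) : ℝ) : ℂ)
          = ((Real.sqrt (c i * c j) : ℝ) : ℂ) := by
        rw [← Complex.ofReal_mul, ← Real.sqrt_mul (hcpos i).le]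
      have hne : ((Real.sqrt (c i * c j) : ℝ) : ℂ) ≠ 0 :=
        Complex.ofReal_ne_zero.mpr
          (Real.sqrt_ne_zero'.mpr (mul_pos (hcpos i) (hcpos j)))
      simp only [Matrix.sub_apply, Matrix.of_apply, Matrix.diagonal_apply_ne _ h]
      rw [sub_zero, sub_zero, hN'def i j]
      rw [mul_right_comm, hij,
        mul_comm (((Real.sqrt (c i * c j) : ℝ) : ℂ)) _, div_mul_cancel₀ _ hne]
  have hmateq : ∀ y : Fin n → ℝ,
      (Matrix.of (fun i j : Fin n =>
          N i.castSucc j.castSucc - N i.castSucc (Fin.last n) * N (Fin.last n) j.castSucc)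
        - Matrix.diagonal fun i : Fin n => ((c i * y i : ℝ) : ℂ)) =
      Matrix.diagonal (fun i => ((Real.sqrt (c i) : ℝ) : ℂ)) *
        (N' - Matrix.diagonal fun i => (y i : ℂ)) *
        Matrix.diagonal (fun i => ((Real.sqrt (c i) : ℝ) : ℂ)) :=
    fun y => aux_eq_diag_mul _ _ _ (hentry y)
  have hGT : ∀ y : Fin n → ℝ,
      ((Matrix.of (fun i j : Fin n =>
          N i.castSucc j.castSucc - N i.castSucc (Fin.last n) * N (Fin.last n) j.castSucc)
        - Matrix.diagonal fun i : Fin n => ((c i * y i : ℝ) : ℂ)).PosSemidef ↔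
      (N' - Matrix.diagonal fun i => (y i : ℂ)).PosSemidef) := by
    intro y
    rw [hmateq y]
    exact aux_conj_diag_psd_iff (fun i => Real.sqrt (c i))
      (fun i => Real.sqrt_ne_zero'.mpr (hcpos i)) _
  -- the key equivalence
  have key : ∀ x : Fin (n + 1) → ℝ, x (Fin.last n) = 0 →
      ((N - Matrix.diagonal fun i => (x i : ℂ)).PosSemidef ↔
        (N' - Matrix.diagonal fun i => ((x i.castSucc / c i : ℝ) : ℂ)).PosSemidef) := by
    intro x hx
    rw [(aux_schur N hN.1 (hNdiag _) x hx).1]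
    have hfun : (fun i : Fin n => ((x i.castSucc : ℝ) : ℂ)) =
        fun i : Fin n => ((c i * (x i.castSucc / c i) : ℝ) : ℂ) := by
      funext i
      rw [mul_comm, div_mul_cancel₀ _ (hcpos i).ne']
    rw [hfun]
    exact hGT (fun i => x i.castSucc / c i)
  -- N' is positive definite
  have hN'psd : N'.PosSemidef := by
    have hfeas0 : (N - Matrix.diagonal fun i : Fin (n + 1) => (((0 : ℝ) : ℂ))).PosSemidef := by
      simpa using hN.posSemidef
    have h0 := (key (fun _ => 0) rfl).mp hfeas0
    simpa using h0
  have hG0 : Matrix.of (fun i j : Fin n =>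
      N i.castSucc j.castSucc - N i.castSucc (Fin.last n) * N (Fin.last n) j.castSucc) =
      Matrix.diagonal (fun i => ((Real.sqrt (c i) : ℝ) : ℂ)) * N' *
        Matrix.diagonal (fun i => ((Real.sqrt (c i) : ℝ) : ℂ)) := by
    have h := hmateq (fun _ => 0)
    simpa using h
  have hdetN' : N'.det ≠ 0 := by
    intro hzero
    have h2 := (aux_schur N hN.1 (hNdiag _) (fun _ => 0) rfl).2
    have hL : (N - Matrix.diagonal fun i : Fin (n + 1) => (((fun _ : Fin (n + 1) => (0 : ℝ)) i : ℝ) : ℂ)) = N := by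
      simp
    rw [hL] at h2
    have hR : ((Matrix.of (fun i j : Fin n =>
        N i.castSucc j.castSucc - N i.castSucc (Fin.last n) * N (Fin.last n) j.castSucc)
        - Matrix.diagonal fun i : Fin n =>
          (((fun _ : Fin (n + 1) => (0 : ℝ)) i.castSucc : ℝ) : ℂ)).det) =
        (Matrix.of (fun i j : Fin n =>
        N i.castSucc j.castSucc - N i.castSucc (Fin.last n) * N (Fin.last n) j.castSucc)).det := by
      simp
    rw [hR, hG0, Matrix.det_mul, Matrix.det_mul, hzero, mul_zero, zero_mul] at h2
    exact hN.det_pos.ne' h2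
  have hN'posdef : N'.PosDef := aux_posDef_of_det hN'psd hdetN'
  -- sum identity
  have hsumid : ∀ x : Fin (n + 1) → ℝ,
      (∑ i : Fin n, η i.castSucc * x i.castSucc) =
        S * ∑ i : Fin n, η' i * (x i.castSucc / c i) := by
    intro x
    rw [Finset.mul_sum]
    apply Finset.sum_congr rfl
    intro i _
    have h1 : c i ≠ 0 := (hcpos i).ne'
    have h2 : S ≠ 0 := hSpos.ne'
    rw [hη'def]
    field_simp
  -- directions between A and B
  have hdirA : ∀ v ∈ A, ∃ w ∈ B, v = S * w := by
    intro v hv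
    rw [hA] at hv
    obtain ⟨x, hx0, hxl, hpsd, rfl⟩ := hv
    refine ⟨∑ i : Fin n, η' i * (x i.castSucc / c i), ?_, hsumid x⟩
    rw [hB]
    exact ⟨fun i => x i.castSucc / c i,
      fun i => div_nonneg (hx0 _) (hcpos i).le, (key x hxl).mp hpsd, rfl⟩
  have hdirB : ∀ w ∈ B, S * w ∈ A := by
    intro w hw
    rw [hB] at hw
    obtain ⟨y, hy0, hpsd, rfl⟩ := hw
    set x : Fin (n + 1) → ℝ :=
      fun k => if h : k = Fin.last n then 0 else c (k.castPred h) * y (k.castPred h) with hxdef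
    have hxc : ∀ i : Fin n, x i.castSucc = c i * y i := by
      intro i
      simp only [hxdef]
      rw [dif_neg (hicne i)]
      rw [Fin.castPred_castSucc]
    have hxl : x (Fin.last n) = 0 := by
      simp [hxdef]
    have hx0 : ∀ k, 0 ≤ x k := by
      intro k
      simp only [hxdef]
      by_cases h : k = Fin.last n
      · rw [dif_pos h]
      · rw [dif_neg h]
        exact mul_nonneg (hcpos _).le (hy0 _)
    have hpsd' : (N - Matrix.diagonal fun i => (x i : ℂ)).PosSemidef := by
      rw [key x hxl]
      have hfun : (fun i : Fin n => ((x i.castSucc / c i : ℝ) : ℂ)) =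
          fun i : Fin n => ((y i : ℝ) : ℂ) := by
        funext i
        rw [hxc i, mul_comm, mul_div_assoc, div_self (hcpos i).ne', mul_one]
      rw [hfun]
      exact hpsd
    rw [hA]
    refine ⟨x, hx0, hxl, hpsd', ?_⟩
    rw [hsumid x]
    congr 1
    apply Finset.sum_congr rfl
    intro i _
    rw [hxc i, mul_comm (c i) (y i), mul_div_assoc, div_self (hcpos i).ne', mul_one]
  -- part 6
  have part6 : ∀ a b : ℝ, IsGreatest A a → IsGreatest B b → a = S * b := by
    rintro a b ⟨haA, haub⟩ ⟨hbB, hbub⟩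
    obtain ⟨w, hwB, rfl⟩ := hdirA a haA
    have h1 : w ≤ b := hbub hwB
    have h2 : S * b ≤ S * w := haub (hdirB b hbB)
    have h3 : b ≤ w := le_of_mul_le_mul_left h2 hSpos
    rw [le_antisymm h1 h3]
  -- part 7
  refine ⟨hcpos, hN'posdef, hN'diag, hη'pos, hη'sum, part6, ?_⟩
  intro x hx0 hxl hpsd
  have hvA : (∑ i : Fin n, η i.castSucc * x i.castSucc) ∈ A := by
    rw [hA]
    exact ⟨x, hx0, hxl, hpsd, rfl⟩
  have hwB : (∑ i : Fin n, η' i * (x i.castSucc / c i)) ∈ B := by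
    rw [hB]
    exact ⟨fun i => x i.castSucc / c i,
      fun i => div_nonneg (hx0 _) (hcpos i).le, (key x hxl).mp hpsd, rfl⟩
  constructor
  · rintro ⟨-, hub⟩
    refine ⟨hwB, fun u huB => ?_⟩
    have h1 : S * u ≤ ∑ i : Fin n, η i.castSucc * x i.castSucc := hub (hdirB u huB)
    rw [hsumid x] at h1
    exact le_of_mul_le_mul_left h1 hSpos
  · rintro ⟨-, hub⟩
    refine ⟨hvA, fun u huA => ?_⟩
    obtain ⟨u', hu'B, rfl⟩ := hdirA u huA
    have h1 : u' ≤ ∑ i : Fin n, η' i * (x i.castSucc / c i) := hub hu'B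
    rw [hsumid x]
    exact mul_le_mul_of_nonneg_left h1 hSpos.le
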